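/- In the random-amplification β-encoder, for every m ≥ 1, given only the first m output bits b_1, …, b_m and only the bounds β_min ≤ β_j ≤ β_max, the input satisfies x ∈ Î_{(b_1,…,b_m)} := [Σ_{k=1}^m b_k β_max^{−k}, Σ_{k=1}^m b_k β_min^{−k} + κ β_min^{−m}]. -/

import Mathlib

open MeasureTheory Filter Set Real

/-- Orbit of the random-amplification β-encoder: `rIter βs u x n` is the iterate `x_n`,
where `x_0 = x` and `x_n = βs_n · x_{n-1} − b_n`. -/
noncomputable def rIter (βs u : ℕ → ℝ) (x : ℝ) : ℕ → ℝ
  | 0 => x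
  | n + 1 =>
      if βs (n + 1) * rIter βs u x n < u (n + 1) then βs (n + 1) * rIter βs u x n
      else βs (n + 1) * rIter βs u x n - 1

/-- The bit `b_n` produced by the random-amplification β-encoder at step `n ≥ 1`. -/
noncomputable def rBit (βs u : ℕ → ℝ) (x : ℝ) (n : ℕ) : ℝ :=
  if βs n * rIter βs u x (n - 1) < u n then 0 else 1

/-- in the random-amplification β-encoder, for every `m ≥ 1`, knowing only
the bits `b_1, …, b_m` and the bounds `β_min ≤ β_j ≤ β_max`, the input satisfies
`x ∈ Î_{(b_1,…,b_m)} = [Σ_{k=1}^m b_k β_max^{−k}, Σ_{k=1}^m b_k β_min^{−k} + κ β_min^{−m}]`. -/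
theorem stmt_13 (βmin βmax : ℝ) (h1 : 1 < βmin) (h2 : βmin ≤ βmax) (h3 : βmax < 2)
    (βs u : ℕ → ℝ)
    (hβs : ∀ n, 1 ≤ n → βs n ∈ Set.Icc βmin βmax)
    (hu : ∀ n, 1 ≤ n → u n ∈ Set.Icc (1:ℝ) (βmax - 1)⁻¹)
    (x : ℝ) (hx : x ∈ Set.Icc (0:ℝ) 1) :
    ∀ m : ℕ, 1 ≤ m →
      x ∈ Set.Icc (∑ k ∈ Finset.Icc 1 m, rBit βs u x k / βmax ^ k)
        ((∑ k ∈ Finset.Icc 1 m, rBit βs u x k / βmin ^ k) + (βmax - 1)⁻¹ / βmin ^ m) := by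
  set κ := (βmax - 1)⁻¹ with hκdef
  have hβmax1 : (1:ℝ) < βmax := lt_of_lt_of_le h1 h2
  have hpos : (0:ℝ) < βmax - 1 := by linarith
  have hκpos : 0 < κ := by positivity
  have hκ1 : (1:ℝ) ≤ κ := by
    rw [hκdef, one_le_inv_iff₀]
    constructor <;> linarith
  have hβminpos : (0:ℝ) < βmin := by linarith
  have hβmaxκ : βmax * κ = 1 + κ := by
    rw [hκdef]; field_simp; ring
  have hiter_succ : ∀ n : ℕ, rIter βs u x (n+1)
      = βs (n+1) * rIter βs u x n - rBit βs u x (n+1) := by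
    intro n
    simp only [rIter, rBit, Nat.add_sub_cancel]
    split_ifs <;> ring
  have hbit : ∀ n : ℕ, rBit βs u x n = 0 ∨ rBit βs u x n = 1 := by
    intro n; unfold rBit; split <;> simp
  -- invariant: iterates lie in [0, κ]
  have hinv : ∀ n : ℕ, rIter βs u x n ∈ Set.Icc (0:ℝ) κ := by
    intro n
    induction n with
    | zero => exact ⟨hx.1, le_trans hx.2 hκ1⟩
    | succ n ih =>
      obtain ⟨hy0, hyκ⟩ := ih
      set y := rIter βs u x n with hy
      have hβ := hβs (n+1) (by omega)
      have hun := hu (n+1) (by omega)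
      have hβ0 : 0 < βs (n+1) := lt_of_lt_of_le (by linarith) hβ.1
      have hby : βs (n+1) * y ≤ βmax * κ :=
        mul_le_mul hβ.2 hyκ hy0 (by linarith)
      simp only [rIter, ← hy]
      split_ifs with h
      · exact ⟨mul_nonneg hβ0.le hy0, le_trans h.le hun.2⟩
      · push_neg at h
        refine ⟨by linarith [hun.1], by rw [hβmaxκ] at hby; linarith⟩
  -- lower bound with remainder
  have hlow : ∀ m : ℕ,
      (∑ k ∈ Finset.Icc 1 m, rBit βs u x k / βmax ^ k) + rIter βs u x m / βmax ^ m ≤ x := by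
    intro m
    induction m with
    | zero => simp [rIter]
    | succ m ih =>
      rw [Finset.sum_Icc_succ_top (by omega : 1 ≤ m + 1), hiter_succ m]
      have hβ := hβs (m+1) (by omega)
      have hy0 := (hinv m).1
      have hBpos : (0:ℝ) < βmax ^ m := by positivity
      have key : rBit βs u x (m+1) / βmax ^ (m+1)
          + (βs (m+1) * rIter βs u x m - rBit βs u x (m+1)) / βmax ^ (m+1)
          ≤ rIter βs u x m / βmax ^ m := by
        rw [← add_div]
        have : rBit βs u x (m+1) + (βs (m+1) * rIter βs u x m - rBit βs u x (m+1))
            = βs (m+1) * rIter βs u x m := by ring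
        rw [this, pow_succ, div_le_div_iff₀ (by positivity) hBpos]
        have h1' : βs (m+1) * rIter βs u x m ≤ βmax * rIter βs u x m :=
          mul_le_mul_of_nonneg_right hβ.2 hy0
        nlinarith
      linarith
  -- upper bound with remainder
  have hhigh : ∀ m : ℕ,
      x ≤ (∑ k ∈ Finset.Icc 1 m, rBit βs u x k / βmin ^ k) + rIter βs u x m / βmin ^ m := by
    intro m
    induction m with
    | zero => simp [rIter]
    | succ m ih =>
      rw [Finset.sum_Icc_succ_top (by omega : 1 ≤ m + 1), hiter_succ m]
      have hβ := hβs (m+1) (by omega)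
      have hy0 := (hinv m).1
      have hBpos : (0:ℝ) < βmin ^ m := by positivity
      have key : rIter βs u x m / βmin ^ m
          ≤ rBit βs u x (m+1) / βmin ^ (m+1)
          + (βs (m+1) * rIter βs u x m - rBit βs u x (m+1)) / βmin ^ (m+1) := by
        rw [← add_div]
        have : rBit βs u x (m+1) + (βs (m+1) * rIter βs u x m - rBit βs u x (m+1))
            = βs (m+1) * rIter βs u x m := by ring
        rw [this, pow_succ, div_le_div_iff₀ hBpos (by positivity)]
        have h1' : βmin * rIter βs u x m ≤ βs (m+1) * rIter βs u x m :=
          mul_le_mul_of_nonneg_right hβ.1 hy0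
        nlinarith
      linarith
  intro m _
  constructor
  · have h0 : 0 ≤ rIter βs u x m / βmax ^ m := by
      have := (hinv m).1; positivity
    linarith [hlow m]
  · have hκm : rIter βs u x m / βmin ^ m ≤ κ / βmin ^ m := by
      apply div_le_div_of_nonneg_right (hinv m).2 (by positivity) |>.trans_eq rfl
    linarith [hhigh m]
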